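/- For p = x_p + i y_p and z = x_z + i y_z two distinct points in the upper half-plane, exp(i·Γ_z(p)) / exp(i·Γ_p(z)) = ((x_p - x_z) - i(y_p + y_z)) / ((x_p - x_z) + i(y_p + y_z)). In particular, (p,z) ↦ exp(i(Γ_z(p) - Γ_p(z))) extends to a continuously differentiable (indeed real-analytic) function on ℍ × ℍ. -/

import Mathlib

open Real

/-- `expGammaAt xp yp x y = exp(i·Γ_p(z))` for `p = xp + i·yp` and `z = x + i·y`, where
`Γ_p(z) := Γ(yp⁻¹(z - xp))` measures the oriented angle between the vertical geodesic ray
from `p` and the geodesic ray from `p` through `z`; explicitly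
`exp(i·Γ_p(x+iy)) = ((x-xp)² + y² - yp² - i·2yp(x-xp)) / √(4(x-xp)²yp² + ((x-xp)²+y²-yp²)²)`. -/
noncomputable def expGammaAt (xp yp x y : ℝ) : ℂ :=
  ((((x - xp) ^ 2 + y ^ 2 - yp ^ 2 : ℝ) : ℂ) - 2 * (yp : ℂ) * ((x - xp : ℝ) : ℂ) * Complex.I) /
    ((Real.sqrt (4 * (x - xp) ^ 2 * yp ^ 2 + ((x - xp) ^ 2 + y ^ 2 - yp ^ 2) ^ 2) : ℝ) : ℂ)

/-- For distinct points `p = xp + i·yp` and `z = xz + i·yz` in the upper half-plane,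
`exp(i·Γ_z(p))/exp(i·Γ_p(z)) = ((xp-xz) - i(yp+yz))/((xp-xz) + i(yp+yz))`; in particular
`(p,z) ↦ exp(i(Γ_z(p) - Γ_p(z)))` extends to a smooth (hence continuously differentiable)
function on `ℍ × ℍ`. -/
theorem expGamma_quotient (xp yp xz yz : ℝ) (hp : 0 < yp) (hz : 0 < yz)
    (hne : (xp, yp) ≠ (xz, yz)) :
    expGammaAt xz yz xp yp / expGammaAt xp yp xz yz =
      (((xp - xz : ℝ) : ℂ) - ((yp + yz : ℝ) : ℂ) * Complex.I) /
        (((xp - xz : ℝ) : ℂ) + ((yp + yz : ℝ) : ℂ) * Complex.I) ∧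
    ContDiffOn ℝ ⊤
      (fun q : (ℝ × ℝ) × (ℝ × ℝ) =>
        (((q.1.1 - q.2.1 : ℝ) : ℂ) - ((q.1.2 + q.2.2 : ℝ) : ℂ) * Complex.I) /
          (((q.1.1 - q.2.1 : ℝ) : ℂ) + ((q.1.2 + q.2.2 : ℝ) : ℂ) * Complex.I))
      {q : (ℝ × ℝ) × (ℝ × ℝ) | 0 < q.1.2 ∧ 0 < q.2.2} := by
  have key : ∀ a b : ℝ, (a ≠ 0 ∨ b ≠ 0) → ((a : ℂ) - (b : ℂ) * Complex.I) ≠ 0 := by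
    intro a b hab h
    rw [Complex.ext_iff] at h
    simp only [Complex.sub_re, Complex.sub_im, Complex.mul_re, Complex.mul_im,
      Complex.ofReal_re, Complex.ofReal_im, Complex.I_re, Complex.I_im, Complex.zero_re,
      Complex.zero_im, mul_zero, mul_one, zero_mul, sub_zero, zero_add, zero_sub] at h
    rcases hab with hab | hab
    · exact hab (by linarith [h.1])
    · exact hab (by linarith [h.2])
  constructor
  · -- algebraic identity
    have hA : xp - xz ≠ 0 ∨ yp - yz ≠ 0 := by
      by_contra h
      push_neg at h
      exact hne (by
        have h1 : xp = xz := by linarith [sub_eq_zero.mp h.1]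
        have h2 : yp = yz := by linarith [sub_eq_zero.mp h.2]
        simp [h1, h2])
    have hAd : (xp - xz) ^ 2 + (yp - yz) ^ 2 > 0 := by
      rcases hA with h | h <;> positivity
    have hAs : (xp - xz) ^ 2 + (yp + yz) ^ 2 > 0 := by positivity
    have hrad1 : 4 * (xp - xz) ^ 2 * yz ^ 2 + ((xp - xz) ^ 2 + yp ^ 2 - yz ^ 2) ^ 2
        = ((xp - xz) ^ 2 + (yp - yz) ^ 2) * ((xp - xz) ^ 2 + (yp + yz) ^ 2) := by ring
    have hrad2 : 4 * (xz - xp) ^ 2 * yp ^ 2 + ((xz - xp) ^ 2 + yz ^ 2 - yp ^ 2) ^ 2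
        = ((xp - xz) ^ 2 + (yp - yz) ^ 2) * ((xp - xz) ^ 2 + (yp + yz) ^ 2) := by ring
    set S : ℝ := ((xp - xz) ^ 2 + (yp - yz) ^ 2) * ((xp - xz) ^ 2 + (yp + yz) ^ 2) with hS
    have hSpos : 0 < S := mul_pos hAd hAs
    have hc : (0 : ℝ) < Real.sqrt S := Real.sqrt_pos.mpr hSpos
    have hcC : ((Real.sqrt S : ℝ) : ℂ) ≠ 0 := by exact_mod_cast hc.ne'
    have hden : (((xp - xz : ℝ) : ℂ) + ((yp + yz : ℝ) : ℂ) * Complex.I) ≠ 0 := by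
      have := key (xp - xz) (-(yp + yz)) (Or.inr (by intro h; linarith))
      intro h; apply this
      rw [← h]; push_cast; ring
    have hN2 : ((((xz - xp) ^ 2 + yz ^ 2 - yp ^ 2 : ℝ) : ℂ)
        - 2 * (yp : ℂ) * ((xz - xp : ℝ) : ℂ) * Complex.I) ≠ 0 := by
      have hfac : ((((xz - xp) ^ 2 + yz ^ 2 - yp ^ 2 : ℝ) : ℂ)
          - 2 * (yp : ℂ) * ((xz - xp : ℝ) : ℂ) * Complex.I)
          = (((xz - xp : ℝ) : ℂ) - ((yp + yz : ℝ) : ℂ) * Complex.I)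
            * (((xz - xp : ℝ) : ℂ) - ((yp - yz : ℝ) : ℂ) * Complex.I) := by
        push_cast
        ring_nf
        simp only [Complex.I_sq]
        ring
      rw [hfac]
      apply mul_ne_zero
      · exact key _ _ (Or.inr (by intro h; linarith))
      · apply key
        rcases hA with h | h
        · exact Or.inl (by intro h'; apply h; linarith)
        · exact Or.inr h
    unfold expGammaAt
    rw [hrad1, hrad2]
    rw [div_div_div_eq, div_eq_div_iff (mul_ne_zero hcC hN2) hden]
    push_cast
    ring_nf
    simp only [Complex.I_sq]
    ring
  · -- smoothness
    have hA : ContDiff ℝ (⊤ : WithTop ℕ∞) (fun q : (ℝ × ℝ) × (ℝ × ℝ) => ((q.1.1 - q.2.1 : ℝ) : ℂ)) :=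
      Complex.ofRealCLM.contDiff.comp (contDiff_fst.fst.sub contDiff_snd.fst)
    have hB : ContDiff ℝ (⊤ : WithTop ℕ∞) (fun q : (ℝ × ℝ) × (ℝ × ℝ) => ((q.1.2 + q.2.2 : ℝ) : ℂ)) :=
      Complex.ofRealCLM.contDiff.comp (contDiff_fst.snd.add contDiff_snd.snd)
    have h1 : ContDiff ℝ (⊤ : WithTop ℕ∞) (fun q : (ℝ × ℝ) × (ℝ × ℝ) =>
        (((q.1.1 - q.2.1 : ℝ) : ℂ) - ((q.1.2 + q.2.2 : ℝ) : ℂ) * Complex.I)) :=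
      hA.sub (hB.mul contDiff_const)
    have h2 : ContDiff ℝ (⊤ : WithTop ℕ∞) (fun q : (ℝ × ℝ) × (ℝ × ℝ) =>
        (((q.1.1 - q.2.1 : ℝ) : ℂ) + ((q.1.2 + q.2.2 : ℝ) : ℂ) * Complex.I)) :=
      hA.add (hB.mul contDiff_const)
    have h0 : ∀ q ∈ {q : (ℝ × ℝ) × (ℝ × ℝ) | 0 < q.1.2 ∧ 0 < q.2.2},
        (((q.1.1 - q.2.1 : ℝ) : ℂ) + ((q.1.2 + q.2.2 : ℝ) : ℂ) * Complex.I) ≠ 0 := by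
      rintro ⟨⟨a, b⟩, ⟨c, d⟩⟩ ⟨hb, hd⟩ h
      have := congrArg Complex.im h
      simp only [Complex.add_im, Complex.mul_im, Complex.ofReal_im, Complex.ofReal_re,
        Complex.I_im, Complex.I_re, Complex.zero_im, mul_zero, mul_one, zero_mul,
        zero_add, add_zero] at this
      dsimp at hb hd this
      linarith
    have hinv := ContDiffOn.inv (h2.contDiffOn) h0
    have hmul := ContDiffOn.mul (h1.contDiffOn) hinv
    simpa only [div_eq_mul_inv, Pi.inv_apply] using hmul
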